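/- Let Γ be a group with trivial center and G a finitely generated nilpotent group. Then every automorphism φ of the direct product Γ × G has the form φ(γ, g) = (α(γ), ρ(γ)·L(g)) for all (γ, g) ∈ Γ × G, where α : Γ → Γ and L : G → G are group automorphisms and ρ : Γ → C(G) is a group homomorphism into the center of G. -/

import Mathlib

lemma ucs_prod_aux (Γ G : Type*) [Group Γ] [Group G] (n : ℕ) :
    Subgroup.upperCentralSeries (Γ × G) n =
      (Subgroup.upperCentralSeries Γ n).prod (Subgroup.upperCentralSeries G n) := by
  induction n with
  | zero => simp [Subgroup.bot_prod_bot]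
  | succ n ih =>
    ext ⟨a, b⟩
    rw [Subgroup.mem_prod, Subgroup.mem_upperCentralSeries_succ_iff,
        Subgroup.mem_upperCentralSeries_succ_iff, Subgroup.mem_upperCentralSeries_succ_iff]
    constructor
    · intro h
      refine ⟨fun c => ?_, fun d => ?_⟩
      · have := h (c, 1); rw [ih, Subgroup.mem_prod] at this; exact this.1
      · have := h (1, d); rw [ih, Subgroup.mem_prod] at this; exact this.2
    · rintro ⟨h1, h2⟩ ⟨c, d⟩
      rw [ih, Subgroup.mem_prod]
      exact ⟨h1 c, h2 d⟩

lemma ucs_centerless (Γ : Type*) [Group Γ] (hΓ : Subgroup.center Γ = ⊥) (n : ℕ) :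
    Subgroup.upperCentralSeries Γ n = ⊥ := by
  induction n with
  | zero => simp
  | succ n ih =>
    rw [eq_bot_iff]
    intro x hx
    rw [Subgroup.mem_upperCentralSeries_succ_iff] at hx
    have hc : x ∈ Subgroup.center Γ := by
      rw [Subgroup.mem_center_iff]
      intro y
      have h := hx y
      rw [ih, Subgroup.mem_bot] at h
      calc y * x = (x * y * x⁻¹ * y⁻¹)⁻¹ * (x * y) := by group
        _ = x * y := by rw [← commutatorElement_def, h]; group
    rw [hΓ] at hc
    exact hc

/-- Neofytidis / Lemma 2.1 in the paper.
Let `Γ` be a group with trivial center and `G` a finitely generated nilpotent group.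
Then every automorphism `φ` of `Γ × G` has the form
`φ (γ, g) = (α γ, ρ γ * L g)`, where `α : Γ ≃* Γ` and `L : G ≃* G` are automorphisms
and `ρ : Γ →* center G` is a homomorphism into the center of `G`. -/
theorem product_automorphism_form
    (Γ G : Type*) [Group Γ] [Group G]
    (hΓ : Subgroup.center Γ = ⊥)
    [Group.FG G] [Group.IsNilpotent G]
    (φ : (Γ × G) ≃* (Γ × G)) :
    ∃ (α : Γ ≃* Γ) (L : G ≃* G) (ρ : Γ →* Subgroup.center G),
      ∀ (γ : Γ) (g : G), φ (γ, g) = (α γ, (ρ γ : G) * L g) := by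
  obtain ⟨n, hn⟩ := Group.IsNilpotent.nilpotent (G := G)
  have hK : Subgroup.upperCentralSeries (Γ × G) n =
      (⊥ : Subgroup Γ).prod (⊤ : Subgroup G) := by
    rw [ucs_prod_aux, ucs_centerless Γ hΓ, hn]
  have key : ∀ (ψ : (Γ × G) ≃* (Γ × G)) (g : G), (ψ (1, g)).1 = 1 := by
    intro ψ g
    have h1 : ((1 : Γ), g) ∈ Subgroup.upperCentralSeries (Γ × G) n := by
      rw [hK]; exact ⟨Subgroup.mem_bot.mpr rfl, trivial⟩
    have h2 := Subgroup.comap_upperCentralSeries ψ n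
    rw [← h2, Subgroup.mem_comap] at h1
    rw [hK] at h1
    exact Subgroup.mem_bot.mp h1.1
  have fst_dep : ∀ (ψ : (Γ × G) ≃* (Γ × G)) (γ : Γ) (g : G),
      (ψ (γ, g)).1 = (ψ (γ, 1)).1 := by
    intro ψ γ g
    have : (γ, g) = (γ, (1 : G)) * (1, g) := by simp
    rw [this, map_mul, Prod.fst_mul, key ψ g, mul_one]
  set L : G ≃* G :=
    { toFun := fun g => (φ (1, g)).2
      invFun := fun g => (φ.symm (1, g)).2
      left_inv := by
        intro g
        show (φ.symm (1, (φ (1, g)).2)).2 = g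
        have h1 : ((1 : Γ), (φ (1, g)).2) = φ (1, g) :=
          Prod.ext (key φ g).symm rfl
        rw [h1, φ.symm_apply_apply]
      right_inv := by
        intro g
        show (φ (1, (φ.symm (1, g)).2)).2 = g
        have h1 : ((1 : Γ), (φ.symm (1, g)).2) = φ.symm (1, g) :=
          Prod.ext (key φ.symm g).symm rfl
        rw [h1, φ.apply_symm_apply]
      map_mul' := by
        intro g h
        show (φ (1, g * h)).2 = (φ (1, g)).2 * (φ (1, h)).2
        have : ((1 : Γ), g * h) = (1, g) * (1, h) := by simp
        rw [this, map_mul, Prod.snd_mul] } with hL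
  set α : Γ ≃* Γ :=
    { toFun := fun γ => (φ (γ, 1)).1
      invFun := fun γ => (φ.symm (γ, 1)).1
      left_inv := by
        intro γ
        show (φ.symm ((φ (γ, 1)).1, 1)).1 = γ
        rw [← fst_dep φ.symm ((φ (γ, 1)).1) ((φ (γ, 1)).2), Prod.mk.eta,
          φ.symm_apply_apply]
      right_inv := by
        intro γ
        show (φ ((φ.symm (γ, 1)).1, 1)).1 = γ
        rw [← fst_dep φ ((φ.symm (γ, 1)).1) ((φ.symm (γ, 1)).2), Prod.mk.eta,
          φ.apply_symm_apply]
      map_mul' := by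
        intro γ δ
        show (φ (γ * δ, 1)).1 = (φ (γ, 1)).1 * (φ (δ, 1)).1
        have : (γ * δ, (1 : G)) = (γ, 1) * (δ, 1) := by simp
        rw [this, map_mul, Prod.fst_mul] } with hα
  have hcent : ∀ γ : Γ, (φ (γ, 1)).2 ∈ Subgroup.center G := by
    intro γ
    rw [Subgroup.mem_center_iff]
    intro g
    obtain ⟨h, rfl⟩ := L.surjective g
    have hcomm : (γ, (1 : G)) * (1, h) = (1, h) * (γ, 1) := by simp
    have := congrArg (fun x => (φ x).2) hcomm
    simp only [map_mul, Prod.snd_mul] at this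
    exact this.symm
  set ρ : Γ →* Subgroup.center G :=
    { toFun := fun γ => ⟨(φ (γ, 1)).2, hcent γ⟩
      map_one' := by
        ext
        show (φ (1, 1)).2 = 1
        rw [show ((1 : Γ), (1 : G)) = (1 : Γ × G) from rfl, map_one]
        rfl
      map_mul' := by
        intro γ δ
        ext
        show (φ (γ * δ, 1)).2 = (φ (γ, 1)).2 * (φ (δ, 1)).2
        have : (γ * δ, (1 : G)) = (γ, 1) * (δ, 1) := by simp
        rw [this, map_mul, Prod.snd_mul] } with hρ
  refine ⟨α, L, ρ, fun γ g => ?_⟩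
  have h : (γ, g) = (γ, (1 : G)) * (1, g) := by simp
  rw [h, map_mul]
  refine Prod.ext ?_ ?_
  · show (φ (γ, 1) * φ (1, g)).1 = (φ (γ, 1)).1
    rw [Prod.fst_mul, key φ g, mul_one]
  · rfl
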